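/- There do not exist a nonempty open interval I ⊆ ℝ, a constant J ∈ ℝ, differentiable functions b, H : I → ℝ and a function h : I → ℝ such that h(t) > 0 and H(t) ≠ 0 for all t ∈ I, and such that, setting a(t) := 2(J·H(t) − 1)/H(t), the following hold for all t ∈ I: b'(t) = h(t)·b(t)·(8J − 5a(t)), H'(t) = 2h(t)·(1 − H(t)·(4J − 3a(t))), and b(t)²·H(t) + 6/H(t) + 3J = 0. -/

import Mathlib

/-- There is no nonempty open interval I, constant J, differentiable functions b, H on I
and positive function h on I with H ≠ 0 on I such that, setting
a(t) = 2(J·H(t) − 1)/H(t), one has b' = h·b·(8J − 5a), H' = 2h(1 − H(4J − 3a)) and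
b²·H + 6/H + 3J = 0 on I. -/
theorem no_solution_case_alpha_eq_a :
    ¬ ∃ (I : Set ℝ) (J : ℝ) (b H h : ℝ → ℝ),
      IsOpen I ∧ I.Nonempty ∧ I.OrdConnected ∧
      (∀ t ∈ I, 0 < h t) ∧ (∀ t ∈ I, H t ≠ 0) ∧
      (∀ t ∈ I, HasDerivAt b
        (h t * b t * (8 * J - 5 * (2 * (J * H t - 1) / H t))) t) ∧
      (∀ t ∈ I, HasDerivAt H
        (2 * h t * (1 - H t * (4 * J - 3 * (2 * (J * H t - 1) / H t)))) t) ∧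
      (∀ t ∈ I, (b t) ^ 2 * H t + 6 / H t + 3 * J = 0) := by
  rintro ⟨I, J, b, H, h, hI, ⟨t₀, ht₀⟩, -, hpos, hHne, hb, hH, hcon⟩
  -- derivative of the constraint function at t₀
  have hb0 := hb t₀ ht₀
  have hH0 := hH t₀ ht₀
  have hg : HasDerivAt (fun t => (b t) ^ 2 * H t + 6 / H t + 3 * J)
      ((2 * b t₀ * (h t₀ * b t₀ * (8 * J - 5 * (2 * (J * H t₀ - 1) / H t₀))) * H t₀
        + (b t₀) ^ 2 * (2 * h t₀ * (1 - H t₀ * (4 * J - 3 * (2 * (J * H t₀ - 1) / H t₀)))))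
        + (0 * H t₀ - 6 * (2 * h t₀ * (1 - H t₀ * (4 * J - 3 * (2 * (J * H t₀ - 1) / H t₀)))))
          / (H t₀) ^ 2 + 0) t₀ := by
    have := (((hb0.pow 2).mul hH0).add
      (((hasDerivAt_const t₀ (6:ℝ)).div hH0 (hHne t₀ ht₀)))).add (hasDerivAt_const t₀ (3*J))
    refine this.congr_deriv ?_
    change ((2:ℕ):ℝ) * b t₀ ^ (2 - 1) * _ * H t₀ + b t₀ ^ 2 * _ + _ + _ = _
    push_cast
    ring
  have hzero : HasDerivAt (fun _ : ℝ => (0:ℝ))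
      ((2 * b t₀ * (h t₀ * b t₀ * (8 * J - 5 * (2 * (J * H t₀ - 1) / H t₀))) * H t₀
        + (b t₀) ^ 2 * (2 * h t₀ * (1 - H t₀ * (4 * J - 3 * (2 * (J * H t₀ - 1) / H t₀)))))
        + (0 * H t₀ - 6 * (2 * h t₀ * (1 - H t₀ * (4 * J - 3 * (2 * (J * H t₀ - 1) / H t₀)))))
          / (H t₀) ^ 2 + 0) t₀ := by
    apply hg.congr_of_eventuallyEq
    filter_upwards [hI.mem_nhds ht₀] with t ht
    exact (hcon t ht).symm
  have hd0 := (hasDerivAt_const t₀ (0:ℝ)).unique hzero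
  set B := b t₀
  set HH := H t₀
  set hh := h t₀
  have hHne' : HH ≠ 0 := hHne t₀ ht₀
  have hhpos : 0 < hh := hpos t₀ ht₀
  have hc := hcon t₀ ht₀
  -- clear denominators
  have hc' : B ^ 2 * HH ^ 2 + 6 + 3 * J * HH = 0 := by
    have := hc
    field_simp at this
    have e : HH * ((b t₀ ^ 2 * H t₀ ^ 2 + 6) / H t₀ + 3 * J) = 0 := by rw [this, mul_zero]
    rw [mul_add, mul_div_cancel₀ _ hHne'] at e
    linarith
  have hd0' : (0:ℝ) = 2 * hh * (5 * B ^ 2 * HH ^ 2 - 12 * J * HH + 30) / HH ^ 2 := by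
    rw [hd0]; field_simp; ring
  have hd0'' : 5 * B ^ 2 * HH ^ 2 - 12 * J * HH + 30 = 0 := by
    have hH2 : HH ^ 2 ≠ 0 := pow_ne_zero 2 hHne'
    have hmul := (div_eq_zero_iff.mp hd0'.symm).resolve_right hH2
    have h2 : (2 * hh) ≠ 0 := by positivity
    exact (mul_eq_zero.mp hmul).resolve_left h2
  -- combine: J * HH = 0 from 5*(B²HH²) = 5*(-6-3JHH)
  nlinarith [hc', hd0'', sq_nonneg (B*HH), sq_nonneg B]
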